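/- Given r, j ∈ ℕ and 0 < δ < 2^{-j}. For any integer 0 ≤ k ≤ j, there exists a ReLU network φ: ℝ → ℝ³ with width 2^{r+1}+3 and depth 2⌈j/r⌉+1 such that for every x ∈ Q(j,δ,1) with binary digits x_1, x_2, … one has φ(x) = ( Σ_{i=1}^k 2^{j−i} x_i, Σ_{i=k+1}^j 2^{j−i} x_i, Σ_{i≥j+1} 2^{j−i} x_i ). -/

import Mathlib

open scoped BigOperators ENNReal

noncomputable section

/-- `f` is an affine map `x ↦ A x + b`. -/
def IsAffineMap (din dout : ℕ) (f : (Fin din → ℝ) → (Fin dout → ℝ)) : Prop :=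
  ∃ (A : Matrix (Fin dout) (Fin din) ℝ) (b : Fin dout → ℝ),
    ∀ x i, f x i = (∑ j, A i j * x j) + b i

/-- `ReluNetExact din dout f N L` asserts that `f = T_L ∘ σ ∘ ⋯ ∘ σ ∘ T_1` where each `T_l`
is affine, `σ` is the coordinatewise ReLU `t ↦ max t 0`, all intermediate dimensions are at
most `N` (the width), and there are `L` affine layers (the depth). -/
inductive ReluNetExact : (din dout : ℕ) → ((Fin din → ℝ) → (Fin dout → ℝ)) → ℕ → ℕ → Prop
  | affine {din dout N : ℕ} {f : (Fin din → ℝ) → (Fin dout → ℝ)}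
      (hf : IsAffineMap din dout f) : ReluNetExact din dout f N 1
  | comp {din k dout N L : ℕ} (hk : k ≤ N) {T : (Fin din → ℝ) → (Fin k → ℝ)}
      (hT : IsAffineMap din k T) {g : (Fin k → ℝ) → (Fin dout → ℝ)}
      (hg : ReluNetExact k dout g N L) :
      ReluNetExact din dout (fun x => g (fun i => max (T x i) 0)) N (L + 1)

/-- `f` is representable by a ReLU network with width at most `N` and depth at most `L`. -/
def IsReluNet (din dout : ℕ) (f : (Fin din → ℝ) → (Fin dout → ℝ)) (N L : ℕ) : Prop :=
  ∃ L' ≤ L, ReluNetExact din dout f N L'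

/-- Scalar-valued version of `IsReluNet`. -/
def IsReluNet1 (din : ℕ) (f : (Fin din → ℝ) → ℝ) (N L : ℕ) : Prop :=
  IsReluNet din 1 (fun x _ => f x) N L

/-- The set `Q(j,δ,1) = [0,1) \ ∪_{k=1}^{2^j-1} (k 2^{-j} - δ, k 2^{-j})`. -/
def Q1 (j : ℕ) (δ : ℝ) : Set ℝ :=
  Set.Ico (0:ℝ) 1 \ ⋃ k ∈ Finset.Icc (1 : ℕ) (2 ^ j - 1), Set.Ioo ((k : ℝ) / 2 ^ j - δ) ((k : ℝ) / 2 ^ j)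

/-- The set `Q(j,δ,d)`: every coordinate lies in `Q(j,δ,1)`. -/
def Qd (j d : ℕ) (δ : ℝ) : Set (Fin d → ℝ) := {x | ∀ i, x i ∈ Q1 j δ}

/-- The `i`-th binary digit (`i ≥ 1`) of `x ∈ [0,1)`: `x_i = ⌊2^i x⌋ mod 2`. -/
noncomputable def bdigit (i : ℕ) (x : ℝ) : ℝ := ((⌊(2:ℝ) ^ i * x⌋ % 2 : ℤ) : ℝ)

/-- scalar affine predicate -/
def Aff1 (d : ℕ) (g : (Fin d → ℝ) → ℝ) : Prop :=
  ∃ (a : Fin d → ℝ) (c : ℝ), ∀ x, g x = (∑ j, a j * x j) + c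

namespace Aff1

lemma const (d : ℕ) (c : ℝ) : Aff1 d (fun _ => c) :=
  ⟨0, c, fun x => by simp⟩

lemma coord (d : ℕ) (i : Fin d) : Aff1 d (fun x => x i) :=
  ⟨fun j => if j = i then 1 else 0, 0, fun x => by
    simp [ite_mul, Finset.sum_ite_eq']⟩

lemma add {d : ℕ} {f g : (Fin d → ℝ) → ℝ} (hf : Aff1 d f) (hg : Aff1 d g) :
    Aff1 d (fun x => f x + g x) := by
  obtain ⟨a, c, hf⟩ := hf; obtain ⟨a', c', hg⟩ := hg
  exact ⟨a + a', c + c', fun x => by simp [hf, hg, add_mul, Finset.sum_add_distrib]; ring⟩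

lemma smul {d : ℕ} (c : ℝ) {f : (Fin d → ℝ) → ℝ} (hf : Aff1 d f) :
    Aff1 d (fun x => c * f x) := by
  obtain ⟨a, b, hf⟩ := hf
  exact ⟨fun j => c * a j, c * b, fun x => by simp [hf, Finset.mul_sum, mul_add, mul_assoc]⟩

lemma sub {d : ℕ} {f g : (Fin d → ℝ) → ℝ} (hf : Aff1 d f) (hg : Aff1 d g) :
    Aff1 d (fun x => f x - g x) := by
  have := hf.add (hg.smul (-1))
  simpa [sub_eq_add_neg] using this

lemma sum {d : ℕ} {ι : Type*} (s : Finset ι) (f : ι → (Fin d → ℝ) → ℝ)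
    (hf : ∀ i ∈ s, Aff1 d (f i)) : Aff1 d (fun x => ∑ i ∈ s, f i x) := by
  classical
  induction s using Finset.induction_on with
  | empty => simpa using const d 0
  | insert a s hnotmem ih =>
    have h1 := hf a (by simp)
    have h2 := ih (fun i hi => hf i (by simp [hi]))
    simpa [Finset.sum_insert hnotmem] using h1.add h2

end Aff1

lemma isAffineMap_of_aff1 {din dout : ℕ} {f : (Fin din → ℝ) → (Fin dout → ℝ)}
    (h : ∀ i, Aff1 din (fun x => f x i)) : IsAffineMap din dout f := by
  choose a c hac using h
  exact ⟨fun i j => a i j, c, fun x i => hac i x⟩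

lemma Aff1.comp_affine {a b : ℕ} {f : (Fin a → ℝ) → (Fin b → ℝ)} {g : (Fin b → ℝ) → ℝ}
    (hf : IsAffineMap a b f) (hg : Aff1 b g) : Aff1 a (fun x => g (f x)) := by
  obtain ⟨A, bb, hA⟩ := hf
  obtain ⟨w, c, hw⟩ := hg
  refine ⟨fun l => ∑ j, w j * A j l, (∑ j, w j * bb j) + c, fun x => ?_⟩
  show g (f x) = _
  rw [hw]
  have : ∀ j, w j * f x j = (∑ l, w j * A j l * x l) + w j * bb j := by
    intro j; rw [hA]; rw [mul_add, Finset.mul_sum]; ring_nf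
  rw [Finset.sum_congr rfl fun j _ => this j]
  rw [Finset.sum_add_distrib, Finset.sum_comm]
  rw [← add_assoc]
  congr 1
  congr 1
  exact Finset.sum_congr rfl fun l _ => by rw [Finset.sum_mul]

lemma IsAffineMap.comp {a b c : ℕ} {f : (Fin a → ℝ) → (Fin b → ℝ)}
    {g : (Fin b → ℝ) → (Fin c → ℝ)} (hf : IsAffineMap a b f) (hg : IsAffineMap b c g) :
    IsAffineMap a c (fun x => g (f x)) := by
  refine isAffineMap_of_aff1 fun i => ?_
  obtain ⟨A, bb, hA⟩ := hg
  have : Aff1 b (fun y => g y i) := ⟨A i, bb i, fun y => hA y i⟩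
  exact this.comp_affine hf

/-- append a hidden layer + output affine layer at the end of a net -/
lemma ReluNetExact.append {a b c d N L : ℕ} {f : (Fin a → ℝ) → (Fin b → ℝ)}
    {T : (Fin b → ℝ) → (Fin d → ℝ)} {G : (Fin d → ℝ) → (Fin c → ℝ)}
    (hf : ReluNetExact a b f N L) (hd : d ≤ N)
    (hT : IsAffineMap b d T) (hG : IsAffineMap d c G) :
    ReluNetExact a c (fun x => G (fun i => max (T (f x) i) 0)) N (L + 1) := by
  induction hf with
  | affine hf0 =>
    exact ReluNetExact.comp hd (hf0.comp hT) (ReluNetExact.affine hG)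
  | comp hk hT0 hg ih =>
    exact ReluNetExact.comp hk hT0 (ih hd hT)



lemma floor_div_nat' (x : ℝ) (n : ℕ) (hn : 0 < n) : ⌊x / n⌋ = ⌊x⌋ / n := by
  have hn' : (0:ℝ) < n := by positivity
  have h1 := Int.emod_nonneg ⌊x⌋ (by exact_mod_cast hn.ne' : (n:ℤ) ≠ 0)
  have h2 := Int.emod_lt_of_pos ⌊x⌋ (by exact_mod_cast hn : (0:ℤ) < n)
  have h3 := Int.mul_ediv_add_emod ⌊x⌋ (n:ℤ)
  have h4 : (⌊x⌋ / n * n : ℤ) = n * (⌊x⌋ / n) := mul_comm _ _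
  have h5 : ((⌊x⌋ / n + 1) * n : ℤ) = n * (⌊x⌋ / n) + n := by ring
  refine Int.floor_eq_iff.mpr ⟨?_, ?_⟩
  · rw [le_div_iff₀ hn']
    have : ((⌊x⌋ / n * n : ℤ) : ℝ) ≤ ((⌊x⌋ : ℤ) : ℝ) := by exact_mod_cast (by omega : (⌊x⌋ / n * n : ℤ) ≤ ⌊x⌋)
    push_cast at this ⊢
    linarith [Int.floor_le x]
  · rw [div_lt_iff₀ hn']
    have : ((⌊x⌋ + 1 : ℤ) : ℝ) ≤ (((⌊x⌋ / n + 1) * n : ℤ) : ℝ) := by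
      exact_mod_cast (by omega : (⌊x⌋ + 1 : ℤ) ≤ (⌊x⌋ / n + 1) * n)
    push_cast at this ⊢
    linarith [Int.lt_floor_add_one x]

lemma bdigit_succ (i : ℕ) (x : ℝ) :
    bdigit (i+1) x = ((⌊(2:ℝ)^(i+1) * x⌋ : ℤ) : ℝ) - 2 * ((⌊(2:ℝ)^i * x⌋ : ℤ) : ℝ) := by
  unfold bdigit
  have h : ⌊(2:ℝ)^(i+1) * x⌋ / 2 = ⌊(2:ℝ)^i * x⌋ := by
    have h' : ⌊(2:ℝ)^(i+1) * x / 2⌋ = ⌊(2:ℝ)^(i+1) * x⌋ / 2 := by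
      simpa using floor_div_nat' ((2:ℝ)^(i+1) * x) 2 (by norm_num)
    rw [← h', show (2:ℝ)^(i+1) * x / 2 = 2^i * x from by rw [pow_succ]; ring]
  have := Int.emod_def ⌊(2:ℝ)^(i+1) * x⌋ 2
  rw [this, h]
  push_cast; ring

lemma bdigit_nonneg (i : ℕ) (x : ℝ) : 0 ≤ bdigit i x := by
  unfold bdigit
  have := Int.emod_nonneg ⌊(2:ℝ)^i * x⌋ (by norm_num : (2:ℤ) ≠ 0)
  exact_mod_cast this

lemma fsum_eq (j a : ℕ) (x : ℝ) :
    ∀ b, a ≤ b → b ≤ j →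
      ∑ i ∈ Finset.Icc (a+1) b, (2:ℝ)^(j-i) * bdigit i x
        = (2:ℝ)^(j-b) * ((⌊(2:ℝ)^b * x⌋ : ℤ) : ℝ)
          - (2:ℝ)^(j-a) * ((⌊(2:ℝ)^a * x⌋ : ℤ) : ℝ) := by
  intro b
  induction b with
  | zero => intro h1 h2; interval_cases a; simp
  | succ b ih =>
    intro h1 h2
    rcases Nat.lt_or_ge a (b+1) with hab | hab
    · have hab' : a ≤ b := by omega
      have hbj : b ≤ j := by omega
      rw [Finset.sum_Icc_succ_top (by omega : a + 1 ≤ b + 1), ih hab' hbj]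
      rw [bdigit_succ]
      have e1 : (2:ℝ)^(j-b) = 2^(j-(b+1)) * 2 := by
        rw [← pow_succ]; congr 1; omega
      rw [e1]; ring
    · have : a = b + 1 := by omega
      subst this; simp


lemma count_div (M p t' : ℕ) (ht : t' ≤ M) :
    ∑ q ∈ Finset.Icc 1 M, (if 2^p ∣ q ∧ q ≤ t' then (1:ℝ) else 0) = ((t' / 2^p : ℕ) : ℝ) := by
  classical
  rw [Finset.sum_boole]
  congr 1
  rw [← Nat.Ioc_filter_dvd_card_eq_div t' (2^p)]
  congr 1
  ext q
  simp only [Finset.mem_filter, Finset.mem_Icc, Finset.mem_Ioc]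
  constructor
  · rintro ⟨⟨h1, _⟩, hd, hle⟩; exact ⟨⟨by omega, hle⟩, hd⟩
  · rintro ⟨⟨h1, hle⟩, hd⟩; exact ⟨⟨by omega, by omega⟩, hd, hle⟩

lemma safety {j b m q : ℕ} {δ x : ℝ} (hδ0 : 0 < δ) (hx : x ∈ Q1 j δ)
    (hbm : b + m ≤ j) (hq1 : 1 ≤ q) (hq2 : q ≤ 2^m - 1) :
    (q:ℝ) / 2^m ≤ (2:ℝ)^b * x - ((⌊(2:ℝ)^b * x⌋ : ℤ) : ℝ) ∨
      (2:ℝ)^b * x - ((⌊(2:ℝ)^b * x⌋ : ℤ) : ℝ) ≤ (q:ℝ) / 2^m - δ := by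
  obtain ⟨⟨hx0, hx1⟩, hxU⟩ := hx
  by_contra hcon
  push_neg at hcon
  obtain ⟨h1, h2⟩ := hcon
  set n : ℤ := ⌊(2:ℝ)^b * x⌋ with hn
  set y : ℝ := (2:ℝ)^b * x - (n:ℝ) with hy
  have hbpos : (0:ℝ) < 2^b := by positivity
  have hmpos : (0:ℝ) < 2^m := by positivity
  have hn0 : 0 ≤ n := Int.floor_nonneg.mpr (by positivity)
  have hnlt : n < 2^b := by
    have hfl : (n:ℝ) ≤ (2:ℝ)^b * x := Int.floor_le _
    have : (n:ℝ) < (2:ℝ)^b := by nlinarith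
    exact_mod_cast this
  set K : ℕ := (n.toNat * 2^m + q) * 2^(j - (b+m)) with hK
  have hpow : (2:ℝ)^(j-(b+m)) * 2^(b+m) = 2^j := by
    rw [← pow_add]; congr 1; omega
  have hKr : (K:ℝ)/2^j = ((n:ℝ) + (q:ℝ)/2^m)/2^b := by
    have hnt : ((n.toNat : ℕ) : ℝ) = (n:ℝ) := by
      exact_mod_cast congrArg (fun z : ℤ => (z:ℝ)) (Int.toNat_of_nonneg hn0)
    have hKc : (K:ℝ) = ((n:ℝ)*2^m + q) * 2^(j-(b+m)) := by
      rw [hK]; push_cast [hnt]; ring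
    rw [hKc, ← hpow, pow_add]
    field_simp
  -- x ∈ Ioo (K/2^j - δ, K/2^j)
  have hxeq : (2:ℝ)^b * x = (n:ℝ) + y := by rw [hy]; ring
  have hup : x < (K:ℝ)/2^j := by
    rw [hKr, lt_div_iff₀ hbpos]
    nlinarith
  have hlo : (K:ℝ)/2^j - δ < x := by
    rw [hKr]
    have h2b1 : (1:ℝ) ≤ 2^b := one_le_pow₀ (by norm_num)
    have : ((n:ℝ) + (q:ℝ)/2^m)/2^b - δ/2^b < x := by
      rw [← sub_div, div_lt_iff₀ hbpos]
      nlinarith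
    have hδδ : δ/2^b ≤ δ := by
      apply div_le_self hδ0.le h2b1
    linarith
  -- K bounds
  have hntlt : n.toNat ≤ 2^b - 1 := by
    have := Int.toNat_of_nonneg hn0
    have h2 : (2:ℤ)^b = ((2^b : ℕ) : ℤ) := by push_cast; rfl
    omega
  have hnpow : (0:ℕ) < 2^(j-(b+m)) := Nat.pow_pos (by norm_num)
  have hK1 : 1 ≤ K := by
    have : 0 < n.toNat * 2^m + q := by omega
    exact Nat.one_le_iff_ne_zero.mpr (Nat.mul_ne_zero (by omega) (by omega))
  have hbm2 : (2:ℕ)^(b+m) = 2^b * 2^m := pow_add 2 b m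
  have hb1 : (1:ℕ) ≤ 2^b := Nat.one_le_two_pow
  have hm1 : (1:ℕ) ≤ 2^m := Nat.one_le_two_pow
  have hbound : n.toNat * 2^m + q ≤ 2^(b+m) - 1 := by
    have h6 : n.toNat * 2^m ≤ (2^b - 1) * 2^m := Nat.mul_le_mul_right _ hntlt
    have h7 : (2^b - 1) * 2^m = 2^b * 2^m - 2^m := by
      rw [Nat.sub_mul, one_mul]
    have h8 : 2^m ≤ 2^b * 2^m := Nat.le_mul_of_pos_left _ (by positivity)
    calc n.toNat * 2^m + q ≤ (2^b - 1) * 2^m + (2^m - 1) := add_le_add h6 hq2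
      _ = 2^b * 2^m - 2^m + (2^m - 1) := by rw [h7]
      _ = 2^b * 2^m - 1 := by omega
      _ = 2^(b+m) - 1 := by rw [hbm2]
  have hepow : (2:ℕ)^(b+m) * 2^(j-(b+m)) = 2^j := by
    rw [← pow_add]; congr 1; omega
  have hK2 : K ≤ 2^j - 1 := by
    have h6 : K ≤ (2^(b+m) - 1) * 2^(j-(b+m)) := Nat.mul_le_mul_right _ hbound
    have h7 : (2^(b+m) - 1) * 2^(j-(b+m)) = 2^(b+m) * 2^(j-(b+m)) - 2^(j-(b+m)) := by
      rw [Nat.sub_mul, one_mul]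
    have h8 : 2^(j-(b+m)) ≤ 2^(b+m) * 2^(j-(b+m)) := Nat.le_mul_of_pos_left _ (by positivity)
    omega
  apply hxU
  simp only [Set.mem_iUnion]
  exact ⟨K, Finset.mem_Icc.mpr ⟨hK1, hK2⟩, hlo, hup⟩

lemma ramp_sum {j b m : ℕ} {δ x : ℝ} (hδ0 : 0 < δ) (hx : x ∈ Q1 j δ) (hbm : b + m ≤ j)
    (w : ℕ → ℝ) :
    (∑ q ∈ Finset.Icc 1 (2^m - 1), w q *
        (max ((2:ℝ)^b * x - ((⌊(2:ℝ)^b * x⌋ : ℤ) : ℝ) - (q:ℝ)/2^m + δ) 0 -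
         max ((2:ℝ)^b * x - ((⌊(2:ℝ)^b * x⌋ : ℤ) : ℝ) - (q:ℝ)/2^m) 0))
      = δ * ∑ q ∈ Finset.Icc 1 (⌊(2:ℝ)^m * ((2:ℝ)^b * x - ((⌊(2:ℝ)^b * x⌋ : ℤ) : ℝ))⌋.toNat), w q := by
  classical
  set y : ℝ := (2:ℝ)^b * x - ((⌊(2:ℝ)^b * x⌋ : ℤ) : ℝ) with hy
  have hy0 : 0 ≤ y := by
    rw [hy]; exact sub_nonneg.mpr (Int.floor_le _)
  have hy1 : y < 1 := by
    rw [hy]; have := Int.lt_floor_add_one ((2:ℝ)^b * x); linarith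
  have hmpos : (0:ℝ) < 2^m := by positivity
  set t : ℤ := ⌊(2:ℝ)^m * y⌋ with hti
  have ht0 : 0 ≤ t := Int.floor_nonneg.mpr (by positivity)
  have htlt : (t:ℝ) ≤ 2^m * y := Int.floor_le _
  have htub : t ≤ 2^m - 1 := by
    have : (t:ℝ) < 2^m := by nlinarith
    have h2 : (2:ℤ)^m = ((2^m:ℕ):ℤ) := by push_cast; rfl
    have : t < (2:ℤ)^m := by exact_mod_cast this
    omega
  set t' : ℕ := t.toNat with ht'
  have ht'le : t' ≤ 2^m - 1 := by
    have h2 : (2:ℤ)^m = ((2^m:ℕ):ℤ) := by push_cast; rfl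
    have hm1 : (1:ℕ) ≤ 2^m := Nat.one_le_two_pow
    omega
  have hterm : ∀ q ∈ Finset.Icc 1 (2^m - 1),
      w q * (max (y - (q:ℝ)/2^m + δ) 0 - max (y - (q:ℝ)/2^m) 0)
        = if q ≤ t' then δ * w q else 0 := by
    intro q hq
    rw [Finset.mem_Icc] at hq
    rcases safety hδ0 hx hbm hq.1 hq.2 with hcase | hcase
    · rw [← hy] at hcase
      have hm1 : max (y - (q:ℝ)/2^m + δ) 0 = y - (q:ℝ)/2^m + δ :=
        max_eq_left (by linarith)
      have hm2 : max (y - (q:ℝ)/2^m) 0 = y - (q:ℝ)/2^m :=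
        max_eq_left (by linarith)
      have hqt : q ≤ t' := by
        have : ((q:ℤ):ℝ) ≤ 2^m * y := by
          push_cast
          rw [div_le_iff₀ hmpos] at hcase
          linarith
        have := Int.le_floor.mpr this
        omega
      rw [hm1, hm2, if_pos hqt]; ring
    · rw [← hy] at hcase
      have hm1 : max (y - (q:ℝ)/2^m + δ) 0 = 0 := max_eq_right (by linarith)
      have hm2 : max (y - (q:ℝ)/2^m) 0 = 0 := max_eq_right (by linarith)
      have hqt : ¬ (q ≤ t') := by
        intro hle
        have hq' : ((q:ℤ):ℝ) ≤ (t:ℝ) := by exact_mod_cast (by omega : (q:ℤ) ≤ t)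
        have : (q:ℝ) ≤ 2^m * y := by push_cast at hq' ⊢; linarith
        have : (q:ℝ)/2^m ≤ y := by rw [div_le_iff₀ hmpos]; linarith
        linarith
      rw [hm1, hm2, if_neg hqt]; ring
  rw [Finset.sum_congr rfl hterm]
  rw [Finset.sum_ite, Finset.sum_const_zero, add_zero]
  rw [Finset.mul_sum]
  apply Finset.sum_congr
  · ext q
    simp only [Finset.mem_filter, Finset.mem_Icc]
    omega
  · intros; rfl
-- ==== stage network ====

def tIdx (M : ℕ) (i : Fin (3 + 2*M)) : Fin 3 := ⟨min (i:ℕ) 2, by omega⟩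

lemma tIdx_val (M : ℕ) (i : Fin (3 + 2*M)) : (tIdx M i : ℕ) = min (i:ℕ) 2 := rfl

noncomputable def tCst (M m : ℕ) (δ : ℝ) (i : Fin (3 + 2*M)) : ℝ :=
  if (i:ℕ) < 3 then 0
  else if (i:ℕ) ≤ 2 + M then δ - (((i:ℕ) - 2 : ℕ) : ℝ)/2^m
  else -((((i:ℕ) - 2 - M : ℕ) : ℝ)/2^m)

noncomputable def stageT (M m : ℕ) (δ : ℝ) : (Fin 3 → ℝ) → (Fin (3 + 2*M) → ℝ) :=
  fun s i => s (tIdx M i) + tCst M m δ i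

def ia (M q : ℕ) : Fin (3 + 2*M) := ⟨2 + min q M, by omega⟩
def ic (M q : ℕ) : Fin (3 + 2*M) := ⟨2 + M + min q M, by omega⟩

noncomputable def stageG (M m p e0 e1 : ℕ) (δ : ℝ) :
    (Fin (3 + 2*M) → ℝ) → (Fin 3 → ℝ) :=
  fun h i =>
    if (i:ℕ) = 0 then
      h ⟨0, by omega⟩ + 2^e0/δ *
        ∑ q ∈ Finset.Icc 1 M, (if 2^p ∣ q then (1:ℝ) else 0) * (h (ia M q) - h (ic M q))
    else if (i:ℕ) = 1 then
      h ⟨1, by omega⟩ + 2^e1/δ * (∑ q ∈ Finset.Icc 1 M, (h (ia M q) - h (ic M q)))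
        - 2^e0/δ *
          ∑ q ∈ Finset.Icc 1 M, (if 2^p ∣ q then (1:ℝ) else 0) * (h (ia M q) - h (ic M q))
    else
      2^m * h ⟨2, by omega⟩ - (1/δ) * ∑ q ∈ Finset.Icc 1 M, (h (ia M q) - h (ic M q))

lemma stageT_aff (M m : ℕ) (δ : ℝ) : IsAffineMap 3 (3 + 2*M) (stageT M m δ) := by
  refine isAffineMap_of_aff1 fun i => ?_
  exact (Aff1.coord 3 (tIdx M i)).add (Aff1.const 3 (tCst M m δ i))

lemma stageG_aff (M m p e0 e1 : ℕ) (δ : ℝ) :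
    IsAffineMap (3 + 2*M) 3 (stageG M m p e0 e1 δ) := by
  refine isAffineMap_of_aff1 fun i => ?_
  have hsum1 : Aff1 (3 + 2*M)
      (fun h => ∑ q ∈ Finset.Icc 1 M,
        (if 2^p ∣ q then (1:ℝ) else 0) * (h (ia M q) - h (ic M q))) :=
    Aff1.sum _ _ fun q _ =>
      ((Aff1.coord _ (ia M q)).sub (Aff1.coord _ (ic M q))).smul _
  have hsum2 : Aff1 (3 + 2*M)
      (fun h => ∑ q ∈ Finset.Icc 1 M, (h (ia M q) - h (ic M q))) :=
    Aff1.sum _ _ fun q _ => (Aff1.coord _ (ia M q)).sub (Aff1.coord _ (ic M q))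
  unfold stageG
  split_ifs
  · exact (Aff1.coord _ _).add (hsum1.smul _)
  · exact ((Aff1.coord _ _).add (hsum2.smul _)).sub (hsum1.smul _)
  · exact (Aff1.smul _ (Aff1.coord _ _)).sub (hsum2.smul _)
def StInv (j k b : ℕ) (x : ℝ) (s : Fin 3 → ℝ) : Prop :=
  s 0 = (2:ℝ)^(j - min k b) * ((⌊(2:ℝ)^(min k b) * x⌋ : ℤ) : ℝ) ∧
  s 1 = (2:ℝ)^(j - b) * ((⌊(2:ℝ)^b * x⌋ : ℤ) : ℝ)
        - (2:ℝ)^(j - min k b) * ((⌊(2:ℝ)^(min k b) * x⌋ : ℤ) : ℝ) ∧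
  s 2 = (2:ℝ)^b * x - ((⌊(2:ℝ)^b * x⌋ : ℤ) : ℝ)

lemma pw {a b c : ℕ} (h1 : c ≤ b) (h2 : b ≤ a) :
    (2:ℝ)^(a-b) * (2:ℝ)^(b-c) = 2^(a-c) := by rw [← pow_add]; congr 1; omega

lemma stage_step (j k b m : ℕ) (hbm : b + m ≤ j) (hkj : k ≤ j)
    {δ x : ℝ} (hδ0 : 0 < δ) (hx : x ∈ Q1 j δ) {s : Fin 3 → ℝ} (hs : StInv j k b x s) :
    StInv j k (b+m) x
      (stageG (2^m - 1) m (m - (min k (b+m) - b)) (j - min k (b+m)) (j - (b+m)) δ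
        (fun i => max (stageT (2^m - 1) m δ s i) 0)) := by
  obtain ⟨hs0, hs1, hs2⟩ := hs
  have hx0 : (0:ℝ) ≤ x := hx.1.1
  have hx1 : x < 1 := hx.1.2
  set M := 2^m - 1 with hM
  set c := min k b with hc
  set c' := min k (b+m) with hc'
  set p := m - (c' - b) with hp
  set nb : ℤ := ⌊(2:ℝ)^b * x⌋ with hnb
  set nc : ℤ := ⌊(2:ℝ)^c * x⌋ with hnc
  set nb' : ℤ := ⌊(2:ℝ)^(b+m) * x⌋ with hnb'
  set nc' : ℤ := ⌊(2:ℝ)^(c') * x⌋ with hnc'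
  set y : ℝ := (2:ℝ)^b * x - (nb:ℝ) with hy
  have hy0 : 0 ≤ y := sub_nonneg.mpr (Int.floor_le _)
  have hy1 : y < 1 := by
    have := Int.lt_floor_add_one ((2:ℝ)^b * x); rw [hy]; push_cast; linarith
  have hnb0 : 0 ≤ nb := Int.floor_nonneg.mpr (by positivity)
  have hnc0 : 0 ≤ nc := Int.floor_nonneg.mpr (by positivity)
  have hcb : c ≤ b := min_le_right k b
  have hbj : b ≤ j := by omega
  have hc'j : c' ≤ j := by
    have := min_le_right k (b+m); omega
  have hc'bm : c' ≤ b + m := min_le_right _ _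
  -- nonnegativity of the state
  have hs0nn : 0 ≤ s 0 := by
    rw [hs0]
    have : (0:ℝ) ≤ (nc:ℝ) := by exact_mod_cast hnc0
    positivity
  have hs1nn : 0 ≤ s 1 := by
    rw [hs1]
    have h1 : ((2^(b-c) * nc : ℤ):ℝ) ≤ (2:ℝ)^b * x := by
      push_cast
      have h2 : (nc:ℝ) ≤ 2^c * x := Int.floor_le _
      have h3 : (2:ℝ)^(b-c) * 2^c = 2^b := by rw [← pow_add]; congr 1; omega
      nlinarith [pow_pos (show (0:ℝ) < 2 by norm_num) (b-c)]
    have h4 : 2^(b-c) * nc ≤ nb := Int.le_floor.mpr h1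
    have h5 : ((2^(b-c) * nc : ℤ):ℝ) ≤ (nb:ℝ) := by exact_mod_cast h4
    push_cast at h5
    have h6 : (2:ℝ)^(j-b) * ((2:ℝ)^(b-c) * nc) ≤ 2^(j-b) * nb := by
      apply mul_le_mul_of_nonneg_left h5 (by positivity)
    rw [← mul_assoc, pw hcb hbj] at h6
    linarith
  have hs2nn : 0 ≤ s 2 := by rw [hs2]; exact hy0
  -- relu passthrough
  have hh0 : max (stageT M m δ s ⟨0, by omega⟩) 0 = s 0 := by
    have e1 : tIdx M ⟨0, by omega⟩ = (0 : Fin 3) := by apply Fin.ext; simp [tIdx]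
    have e2 : tCst M m δ ⟨0, by omega⟩ = 0 := by simp [tCst]
    rw [stageT, e1, e2, add_zero]; exact max_eq_left hs0nn
  have hh1 : max (stageT M m δ s ⟨1, by omega⟩) 0 = s 1 := by
    have e1 : tIdx M ⟨1, by omega⟩ = (1 : Fin 3) := by apply Fin.ext; simp [tIdx]
    have e2 : tCst M m δ ⟨1, by omega⟩ = 0 := by simp [tCst]
    rw [stageT, e1, e2, add_zero]; exact max_eq_left hs1nn
  have hh2 : max (stageT M m δ s ⟨2, by omega⟩) 0 = s 2 := by
    have e1 : tIdx M ⟨2, by omega⟩ = (2 : Fin 3) := by apply Fin.ext; simp [tIdx]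
    have e2 : tCst M m δ ⟨2, by omega⟩ = 0 := by simp [tCst]
    rw [stageT, e1, e2, add_zero]; exact max_eq_left hs2nn
  -- ramp neurons
  have hramp : ∀ q ∈ Finset.Icc 1 M,
      max (stageT M m δ s (ia M q)) 0 - max (stageT M m δ s (ic M q)) 0
        = max ((2:ℝ)^b * x - (nb:ℝ) - (q:ℝ)/2^m + δ) 0
          - max ((2:ℝ)^b * x - (nb:ℝ) - (q:ℝ)/2^m) 0 := by
    intro q hq
    rw [Finset.mem_Icc] at hq
    have hminq : min q M = q := min_eq_left hq.2
    have hvala : ((ia M q : Fin (3+2*M)) : ℕ) = 2 + q := by simp [ia, hminq]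
    have hvalc : ((ic M q : Fin (3+2*M)) : ℕ) = 2 + M + q := by simp [ic, hminq]
    have eia1 : tIdx M (ia M q) = (2 : Fin 3) := by
      apply Fin.ext
      rw [tIdx_val, hvala, Nat.min_eq_right (by omega)]
      rfl
    have eia2 : tCst M m δ (ia M q) = δ - (q:ℝ)/2^m := by
      simp only [tCst, hvala]
      rw [if_neg (by omega), if_pos (by omega), show 2 + q - 2 = q from by omega]
    have eic1 : tIdx M (ic M q) = (2 : Fin 3) := by
      apply Fin.ext
      rw [tIdx_val, hvalc, Nat.min_eq_right (by omega)]
      rfl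
    have eic2 : tCst M m δ (ic M q) = -((q:ℝ)/2^m) := by
      simp only [tCst, hvalc]
      rw [if_neg (by omega), if_neg (by omega), show 2 + M + q - 2 - M = q from by omega]
    rw [stageT, stageT, eia1, eia2, eic1, eic2, hs2, hy]
    congr 2 <;> ring
  -- the two key sums
  set t : ℤ := ⌊(2:ℝ)^m * y⌋ with ht
  have ht0 : 0 ≤ t := Int.floor_nonneg.mpr (by positivity)
  set t' : ℕ := t.toNat with ht'
  have ht'c : ((t':ℕ):ℤ) = t := Int.toNat_of_nonneg ht0
  have htub : t' ≤ M := by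
    have h1 : (t:ℝ) ≤ 2^m * y := Int.floor_le _
    have h2 : (t:ℝ) < 2^m := by nlinarith [pow_pos (show (0:ℝ) < 2 by norm_num) m]
    have h3 : t < 2^m := by exact_mod_cast h2
    have h4 : (2:ℤ)^m = ((2^m : ℕ):ℤ) := by push_cast; rfl
    omega
  have hsum_all : ∑ q ∈ Finset.Icc 1 M, (max (stageT M m δ s (ia M q)) 0 - max (stageT M m δ s (ic M q)) 0)
      = δ * (t':ℝ) := by
    rw [Finset.sum_congr rfl hramp]
    have := ramp_sum hδ0 hx hbm (fun _ => (1:ℝ))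
    rw [hM]
    simp only [one_mul] at this
    rw [← hnb] at this
    rw [this]
    rw [← hy, ← ht, ← ht']
    simp [Nat.card_Icc]
  have hsum_div : ∑ q ∈ Finset.Icc 1 M, (if 2^p ∣ q then (1:ℝ) else 0) * (max (stageT M m δ s (ia M q)) 0 - max (stageT M m δ s (ic M q)) 0)
      = δ * ((t' / 2^p : ℕ) : ℝ) := by
    rw [Finset.sum_congr rfl (fun q hq => by rw [hramp q hq])]
    have := ramp_sum hδ0 hx hbm (fun q => if 2^p ∣ q then (1:ℝ) else 0)
    rw [hM, ← hnb] at *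
    rw [this, ← hy, ← ht, ← ht']
    congr 1
    rw [← count_div t' p t' le_rfl]
    apply Finset.sum_congr rfl
    intro q hq
    rw [Finset.mem_Icc] at hq
    by_cases hd : 2^p ∣ q
    · rw [if_pos hd, if_pos ⟨hd, hq.2⟩]
    · rw [if_neg hd, if_neg (by tauto)]
  -- integer identities
  have hpow_m : ((2^m : ℕ):ℝ) = (2:ℝ)^m := by push_cast; rfl
  have hA : (t:ℝ) = (nb':ℝ) - 2^m * (nb:ℝ) := by
    have e : (2:ℝ)^m * y = (2:ℝ)^(b+m) * x - ((2^m * nb : ℤ):ℝ) := by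
      rw [hy, pow_add]; push_cast; ring
    have : t = nb' - 2^m * nb := by
      rw [ht, e, Int.floor_sub_intCast, hnb']
    rw [this]; push_cast; ring
  set h' : ℕ := c' - b with hh'
  have hph' : p + h' = m := by
    rw [hp]; omega
  have hu1 : t / (2^p : ℤ) = ⌊(2:ℝ)^h' * y⌋ := by
    have e1 : ((2^p : ℕ):ℝ) = (2:ℝ)^p := by push_cast; rfl
    have e2 : (2:ℝ)^m * y / ((2^p:ℕ):ℝ) = (2:ℝ)^h' * y := by
      rw [e1, ← hph', pow_add]
      field_simp
    have e3 : ((2^p : ℕ):ℤ) = (2:ℤ)^p := by push_cast; rfl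
    have h4 := floor_div_nat' ((2:ℝ)^m * y) (2^p) (by positivity)
    rw [e2, e3, ← ht] at h4
    exact h4.symm
  have hKEY : (2:ℝ)^(j-c') * ((t / (2^p:ℤ) : ℤ):ℝ)
      = (2:ℝ)^(j-c') * (nc':ℝ) - (2:ℝ)^(j-c) * (nc:ℝ) := by
    rcases le_or_gt k b with hkb | hkb
    · -- k ≤ b : c = c' = k, h' = 0, u = 0
      have hcc : c = k := by rw [hc]; omega
      have hcc' : c' = k := by rw [hc']; omega
      have hh'0 : h' = 0 := by rw [hh']; omega
      have : t / (2^p : ℤ) = 0 := by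
        rw [hu1, hh'0, pow_zero, one_mul]
        exact Int.floor_eq_zero_iff.mpr ⟨hy0, hy1⟩
      rw [this, hcc, hcc']
      simp [hnc, hnc', hcc, hcc']
    · -- b < k : c = b
      have hcc : c = b := by rw [hc]; omega
      have hbc' : b ≤ c' := by rw [hc']; omega
      have hbh' : b + h' = c' := by rw [hh']; omega
      have hu2 : t / (2^p:ℤ) = nc' - 2^h' * nb := by
        rw [hu1]
        have e : (2:ℝ)^h' * y = (2:ℝ)^(c') * x - ((2^h' * nb : ℤ):ℝ) := by
          rw [hy, ← hbh', pow_add]; push_cast; ring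
        rw [e, Int.floor_sub_intCast, hnc']
      rw [hu2]
      push_cast
      have e3 : (2:ℝ)^(j-c') * 2^h' = 2^(j-b) := by
        rw [← pow_add]; congr 1; omega
      rw [mul_sub, ← mul_assoc, e3, hcc]
      have hncb : nc = nb := by rw [hnc, hnb, hcc]
      rw [hncb]
  have hδne : δ ≠ 0 := ne_of_gt hδ0
  have ht'r : ((t':ℕ):ℝ) = (t:ℝ) := by exact_mod_cast ht'c
  have hcast_u : ((t' / 2^p : ℕ) : ℝ) = ((t / (2^p:ℤ) : ℤ) : ℝ) := by
    have e : ((t' / 2^p : ℕ) : ℤ) = (t / (2^p:ℤ) : ℤ) := by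
      have e2 : ((t' / 2^p : ℕ) : ℤ) = ((t' : ℕ) : ℤ) / (((2^p : ℕ) : ℕ) : ℤ) := by
        push_cast; rfl
      rw [e2, ht'c]
      congr 1
    rw [← e]
    norm_cast
  have e5div : (2:ℝ)^(j-c')/δ * (δ * ((t / (2^p:ℤ) : ℤ):ℝ))
      = 2^(j-c') * ((t / (2^p:ℤ) : ℤ):ℝ) := by field_simp
  have e5all : (2:ℝ)^(j-(b+m))/δ * (δ * ((t':ℕ):ℝ)) = 2^(j-(b+m)) * (t:ℝ) := by
    rw [ht'r]; field_simp
  have e4 : (2:ℝ)^(j-(b+m)) * 2^m = 2^(j-b) := by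
    rw [← pow_add]; congr 1; omega
  have hA2 : (2:ℝ)^(j-(b+m)) * (t:ℝ)
      = 2^(j-(b+m)) * (nb':ℝ) - 2^(j-b) * (nb:ℝ) := by
    rw [hA, mul_sub, ← mul_assoc, e4]
  refine ⟨?_, ?_, ?_⟩
  · show stageG M m p (j - c') (j - (b+m)) δ _ 0 = _
    rw [stageG]
    rw [if_pos (show ((0 : Fin 3):ℕ) = 0 from rfl)]
    rw [hh0, hsum_div, hs0, hcast_u, e5div]
    linarith [hKEY]
  · show stageG M m p (j - c') (j - (b+m)) δ _ 1 = _
    rw [stageG]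
    rw [if_neg (show ¬((1 : Fin 3):ℕ) = 0 by norm_num),
        if_pos (show ((1 : Fin 3):ℕ) = 1 from rfl)]
    rw [hh1, hsum_all, hsum_div, hs1, hcast_u, e5div, e5all]
    linarith [hKEY, hA2]
  · show stageG M m p (j - c') (j - (b+m)) δ _ 2 = _
    rw [stageG]
    rw [if_neg (show ¬((2 : Fin 3):ℕ) = 0 by norm_num),
        if_neg (show ¬((2 : Fin 3):ℕ) = 1 by norm_num)]
    rw [hh2, hsum_all, hs2]
    have e5 : (1:ℝ)/δ * (δ * ((t':ℕ):ℝ)) = (t:ℝ) := by rw [ht'r]; field_simp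
    rw [e5, ← hnb']
    have e6 : (2:ℝ)^(b+m) * x = 2^m * ((2:ℝ)^b * x) := by rw [pow_add]; ring
    rw [e6, hA]
    ring

end
lemma base_net (j k N : ℕ) :
    ∃ ψ : (Fin 1 → ℝ) → (Fin 3 → ℝ), ReluNetExact 1 3 ψ N 1 ∧
      ∀ x : ℝ, 0 ≤ x → x < 1 → StInv j k 0 x (ψ (fun _ => x)) := by
  refine ⟨fun v i => if (i:ℕ) = 2 then v 0 else 0, ReluNetExact.affine ?_, ?_⟩
  · refine isAffineMap_of_aff1 fun i => ?_
    by_cases h : (i:ℕ) = 2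
    · simp only [h, if_pos]
      exact Aff1.coord 1 0
    · simp only [h, if_neg, if_false]
      exact Aff1.const 1 0
  · intro x hx0 hx1
    have hfl : ⌊(2:ℝ)^(0:ℕ) * x⌋ = 0 := by
      rw [pow_zero, one_mul]; exact Int.floor_eq_zero_iff.mpr ⟨hx0, hx1⟩
    have hmin : min k 0 = 0 := Nat.min_zero k
    refine ⟨?_, ?_, ?_⟩
    · show (if ((0 : Fin 3):ℕ) = 2 then x else 0) = _
      rw [if_neg (by norm_num), hmin, hfl]
      norm_num
    · show (if ((1 : Fin 3):ℕ) = 2 then x else 0) = _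
      rw [if_neg (by norm_num), hmin, hfl]
      norm_num
    · show (if ((2 : Fin 3):ℕ) = 2 then x else 0) = _
      rw [if_pos (by norm_num : ((2 : Fin 3):ℕ) = 2), hfl]
      norm_num

lemma chain (r j k : ℕ) (hr : 0 < r) (hkj : k ≤ j) (δ : ℝ) (hδ0 : 0 < δ) :
    ∀ t : ℕ, ∃ ψ : (Fin 1 → ℝ) → (Fin 3 → ℝ),
      ReluNetExact 1 3 ψ (2^(r+1) + 3) (t+1) ∧
      ∀ x ∈ Q1 j δ, StInv j k (min (t*r) j) x (ψ (fun _ => x)) := by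
  intro t
  induction t with
  | zero =>
    obtain ⟨ψ, hnet, hinv⟩ := base_net j k (2^(r+1) + 3)
    refine ⟨ψ, hnet, fun x hx => ?_⟩
    have : min (0*r) j = 0 := by omega
    rw [this]
    exact hinv x hx.1.1 hx.1.2
  | succ t ih =>
    obtain ⟨ψ, hnet, hinv⟩ := ih
    set b := min (t*r) j with hb
    set m := min ((t+1)*r) j - b with hm
    have e : (t+1)*r = t*r + r := by ring
    have hmr : m ≤ r := by omega
    have hbm : b + m = min ((t+1)*r) j := by omega
    have hbmj : b + m ≤ j := by rw [hbm]; omega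
    have hd : 3 + 2*(2^m - 1) ≤ 2^(r+1) + 3 := by
      have h1 : (2:ℕ)^m ≤ 2^r := Nat.pow_le_pow_right (by norm_num) hmr
      have h2 : (2:ℕ)^(r+1) = 2 * 2^r := by rw [pow_succ]; ring
      have h3 : (1:ℕ) ≤ 2^m := Nat.one_le_two_pow
      omega
    refine ⟨fun v => stageG (2^m - 1) m (m - (min k (min ((t+1)*r) j) - b))
        (j - min k (min ((t+1)*r) j)) (j - min ((t+1)*r) j) δ
        (fun i => max (stageT (2^m - 1) m δ (ψ v) i) 0),
      ?_, fun x hx => ?_⟩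
    · exact hnet.append hd (stageT_aff _ _ _)
        (stageG_aff _ _ _ _ _ _)
    · have := stage_step j k b m hbmj hkj hδ0 hx (hinv x hx)
      rw [hbm] at this
      exact this


/-- Lemma `bit extraction sum`. -/
theorem stmt6 (r j : ℕ) (hr : 0 < r) (hj : 0 < j) (δ : ℝ) (hδ0 : 0 < δ)
    (hδ : δ < ((2:ℝ) ^ j)⁻¹) (k : ℕ) (hk : k ≤ j) :
    ∃ φ : (Fin 1 → ℝ) → (Fin 3 → ℝ),
      IsReluNet 1 3 φ (2 ^ (r + 1) + 3) (2 * ⌈(j : ℝ) / (r : ℝ)⌉₊ + 1) ∧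
      ∀ x ∈ Q1 j δ,
        φ (fun _ => x) 0 = (∑ i ∈ Finset.Icc 1 k, (2:ℝ) ^ (j - i) * bdigit i x) ∧
        φ (fun _ => x) 1 = (∑ i ∈ Finset.Icc (k + 1) j, (2:ℝ) ^ (j - i) * bdigit i x) ∧
        φ (fun _ => x) 2 =
          (2:ℝ) ^ j * x - ∑ i ∈ Finset.Icc 1 j, (2:ℝ) ^ (j - i) * bdigit i x := by
  set s := ⌈(j : ℝ) / (r : ℝ)⌉₊ with hs
  have hrs : j ≤ s * r := by
    have h1 : (j:ℝ)/(r:ℝ) ≤ s := Nat.le_ceil _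
    have hr' : (0:ℝ) < r := by exact_mod_cast hr
    rw [div_le_iff₀ hr'] at h1
    exact_mod_cast h1
  obtain ⟨ψ, hnet, hinv⟩ := chain r j k hr hk δ hδ0 s
  have hminj : min (s*r) j = j := min_eq_right hrs
  refine ⟨ψ, ⟨s+1, by omega, hnet⟩, fun x hx => ?_⟩
  have hI := hinv x hx
  rw [hminj] at hI
  obtain ⟨h0, h1, h2⟩ := hI
  have hx0 : (0:ℝ) ≤ x := hx.1.1
  have hx1 : x < 1 := hx.1.2
  have hfl0 : ⌊(2:ℝ)^(0:ℕ) * x⌋ = 0 := by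
    rw [pow_zero, one_mul]; exact Int.floor_eq_zero_iff.mpr ⟨hx0, hx1⟩
  have hminkj : min k j = k := min_eq_left hk
  have f1 := fsum_eq j 0 x k (by omega) hk
  have f2 := fsum_eq j k x j hk le_rfl
  have f3 := fsum_eq j 0 x j (by omega) le_rfl
  rw [hfl0] at f1 f3
  norm_num at f1 f3
  refine ⟨?_, ?_, ?_⟩
  · rw [h0, hminkj, f1]
  · rw [h1, hminkj, f2]
  · rw [h2, f3]
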